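/- Let G be an étale locally compact Hausdorff groupoid. Then G is ample, i.e. the compact open bisections form a basis for the topology of G, if and only if the unit space G^(0) is totally disconnected. -/

import Mathlib

open MeasureTheory Topology Filter
open scoped ENNReal

universe u v

/-- A locally compact Hausdorff groupoid, modelled as a type `G` with a partially
defined multiplication (via the composability predicate `Comp`), an inversion,
and continuity of the structure maps. -/
structure TopGroupoid (G : Type u) [TopologicalSpace G] where
  mul : G → G → G
  inv : G → G
  Comp : G → G → Prop
  inv_inv : ∀ g, inv (inv g) = g
  comp_inv : ∀ g, Comp g (inv g)
  comp_iff : ∀ g h, Comp g h ↔ mul (inv g) g = mul h (inv h)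
  assoc : ∀ g₁ g₂ g₃, Comp g₁ g₂ → Comp g₂ g₃ →
    Comp (mul g₁ g₂) g₃ ∧ Comp g₁ (mul g₂ g₃) ∧
      mul (mul g₁ g₂) g₃ = mul g₁ (mul g₂ g₃)
  inv_mul_cancel_left : ∀ g h, Comp g h → mul (inv g) (mul g h) = h
  mul_inv_cancel_right : ∀ g h, Comp g h → mul (mul g h) (inv h) = g
  dmul : ∀ g h, Comp g h → mul (inv (mul g h)) (mul g h) = mul (inv h) h
  rmul : ∀ g h, Comp g h → mul (mul g h) (inv (mul g h)) = mul g (inv g)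
  continuous_inv : Continuous inv
  continuous_mul : Continuous fun p : {p : G × G // Comp p.1 p.2} => mul p.1.1 p.1.2

namespace TopGroupoid

variable {G : Type u} [TopologicalSpace G] (𝒢 : TopGroupoid G)

/-- The domain map `d(g) = g⁻¹ g`. -/
def d (g : G) : G := 𝒢.mul (𝒢.inv g) g

/-- The range map `r(g) = g g⁻¹`. -/
def r (g : G) : G := 𝒢.mul g (𝒢.inv g)

/-- The unit space `G⁽⁰⁾ = {g | g = g⁻¹ = g²}`. -/
def units : Set G := {g | 𝒢.inv g = g ∧ 𝒢.mul g g = g}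

theorem comp_iff' (g h : G) : 𝒢.Comp g h ↔ 𝒢.d g = 𝒢.r h := 𝒢.comp_iff g h

theorem d_inv (g : G) : 𝒢.d (𝒢.inv g) = 𝒢.r g := by
  simp only [d, r, 𝒢.inv_inv]

theorem r_inv (g : G) : 𝒢.r (𝒢.inv g) = 𝒢.d g := by
  simp only [d, r, 𝒢.inv_inv]

theorem d_mul {g h : G} (hc : 𝒢.Comp g h) : 𝒢.d (𝒢.mul g h) = 𝒢.d h := 𝒢.dmul g h hc

theorem r_mul {g h : G} (hc : 𝒢.Comp g h) : 𝒢.r (𝒢.mul g h) = 𝒢.r g := 𝒢.rmul g h hc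

theorem comp_inv_right {g h : G} (hd : 𝒢.d g = 𝒢.d h) : 𝒢.Comp g (𝒢.inv h) := by
  rw [𝒢.comp_iff', 𝒢.r_inv]; exact hd

theorem comp_inv_left {g h : G} (hr : 𝒢.r g = 𝒢.r h) : 𝒢.Comp (𝒢.inv g) h := by
  rw [𝒢.comp_iff', 𝒢.d_inv]; exact hr

/-- `G` is étale if the domain map is a local homeomorphism. -/
def Etale : Prop := IsLocalHomeomorph 𝒢.d

/-- An open bisection: an open set on which both `d` and `r` restrict to
homeomorphisms onto open subsets. -/
def IsBisection (U : Set G) : Prop :=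
  IsOpen U ∧ IsOpenEmbedding (U.restrict 𝒢.d) ∧ IsOpenEmbedding (U.restrict 𝒢.r)

/-- `G` is ample if the compact open bisections form a basis of the topology. -/
def Ample : Prop :=
  TopologicalSpace.IsTopologicalBasis {U : Set G | 𝒢.IsBisection U ∧ IsCompact U}

/-- A subgroupoid: a subset closed under inversion and (composable) products. -/
def IsSubgroupoid (H : Set G) : Prop :=
  (∀ g ∈ H, 𝒢.inv g ∈ H) ∧ ∀ g h, g ∈ H → h ∈ H → 𝒢.Comp g h → 𝒢.mul g h ∈ H

end TopGroupoid

section Aux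

open TopologicalSpace Set TopGroupoid

namespace TopGroupoid

variable {G : Type u} [TopologicalSpace G] (𝒢 : TopGroupoid G)

theorem comp_inv_self (g : G) : 𝒢.Comp (𝒢.inv g) g := by
  rw [𝒢.comp_iff, 𝒢.inv_inv]

theorem d_d (g : G) : 𝒢.d (𝒢.d g) = 𝒢.d g :=
  𝒢.dmul (𝒢.inv g) g (𝒢.comp_inv_self g)

theorem r_d (g : G) : 𝒢.r (𝒢.d g) = 𝒢.d g := by
  have h := 𝒢.rmul (𝒢.inv g) g (𝒢.comp_inv_self g)
  rw [𝒢.inv_inv] at h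
  exact h

theorem inv_d (g : G) : 𝒢.inv (𝒢.d g) = 𝒢.d g := by
  have h1 : 𝒢.mul (𝒢.inv (𝒢.d g)) (𝒢.d g) = 𝒢.d g := 𝒢.d_d g
  have h2 := 𝒢.mul_inv_cancel_right (𝒢.inv (𝒢.d g)) (𝒢.d g) (𝒢.comp_inv_self _)
  rw [h1] at h2
  have h3 : 𝒢.mul (𝒢.d g) (𝒢.inv (𝒢.d g)) = 𝒢.d g := 𝒢.r_d g
  exact h2.symm.trans h3

theorem mul_d_d (g : G) : 𝒢.mul (𝒢.d g) (𝒢.d g) = 𝒢.d g := by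
  have h : 𝒢.mul (𝒢.d g) (𝒢.inv (𝒢.d g)) = 𝒢.d g := 𝒢.r_d g
  rwa [𝒢.inv_d] at h

theorem units_eq_range : 𝒢.units = Set.range 𝒢.d := by
  ext u
  constructor
  · intro hu
    refine ⟨u, ?_⟩
    show 𝒢.mul (𝒢.inv u) u = u
    rw [hu.1, hu.2]
  · rintro ⟨g, rfl⟩
    exact ⟨𝒢.inv_d g, 𝒢.mul_d_d g⟩

theorem r_eq (g : G) : 𝒢.r g = 𝒢.d (𝒢.inv g) := by
  show 𝒢.mul g (𝒢.inv g) = 𝒢.mul (𝒢.inv (𝒢.inv g)) (𝒢.inv g)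
  rw [𝒢.inv_inv]

/-- Any open set on which both `d` and `r` are injective is a bisection. -/
theorem isBisection_of_injOn (hEt : 𝒢.Etale) {U : Set G} (hU : IsOpen U)
    (hdi : Set.InjOn 𝒢.d U) (hri : Set.InjOn 𝒢.r U) : 𝒢.IsBisection U := by
  have hd_cont : Continuous 𝒢.d := IsLocalHomeomorph.continuous hEt
  have hd_open : IsOpenMap 𝒢.d := IsLocalHomeomorph.isOpenMap hEt
  have hinv_image : ∀ s : Set G, 𝒢.inv '' s = 𝒢.inv ⁻¹' s := by
    intro s
    ext x
    constructor
    · rintro ⟨y, hy, rfl⟩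
      show 𝒢.inv (𝒢.inv y) ∈ s
      rwa [𝒢.inv_inv]
    · intro hx
      exact ⟨𝒢.inv x, hx, 𝒢.inv_inv x⟩
  have hinv_open : IsOpenMap 𝒢.inv := fun s hs =>
    (hinv_image s) ▸ hs.preimage 𝒢.continuous_inv
  have hr_eq : 𝒢.r = 𝒢.d ∘ 𝒢.inv := funext fun g => 𝒢.r_eq g
  have hr_cont : Continuous 𝒢.r := hr_eq ▸ hd_cont.comp 𝒢.continuous_inv
  have hr_open : IsOpenMap 𝒢.r := hr_eq ▸ hd_open.comp hinv_open
  refine ⟨hU, ?_, ?_⟩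
  · rw [isOpenEmbedding_iff_continuous_injective_isOpenMap]
    exact ⟨hd_cont.comp continuous_subtype_val, hdi.injective, hd_open.restrict hU⟩
  · rw [isOpenEmbedding_iff_continuous_injective_isOpenMap]
    exact ⟨hr_cont.comp continuous_subtype_val, hri.injective, hr_open.restrict hU⟩

/-- Every point has an open neighbourhood on which both `d` and `r` are injective. -/
theorem exists_bisection_nhd (hEt : 𝒢.Etale) (g : G) :
    ∃ U : Set G, IsOpen U ∧ g ∈ U ∧ Set.InjOn 𝒢.d U ∧ Set.InjOn 𝒢.r U := by
  obtain ⟨e, hge, hde⟩ := hEt g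
  obtain ⟨f, hgf, hdf⟩ := hEt (𝒢.inv g)
  refine ⟨e.source ∩ 𝒢.inv ⁻¹' f.source,
    e.open_source.inter (f.open_source.preimage 𝒢.continuous_inv), ⟨hge, hgf⟩, ?_, ?_⟩
  · exact (hde ▸ e.injOn).mono inter_subset_left
  · intro a ha b hb hab
    rw [𝒢.r_eq a, 𝒢.r_eq b] at hab
    have h2 : 𝒢.inv a = 𝒢.inv b := (hdf ▸ f.injOn) ha.2 hb.2 hab
    have h3 := congrArg 𝒢.inv h2
    rwa [𝒢.inv_inv, 𝒢.inv_inv] at h3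

end TopGroupoid

end Aux


/-- An étale locally compact Hausdorff groupoid is ample (the compact
open bisections form a basis) if and only if its unit space is totally disconnected. -/
theorem ample_iff_totally_disconnected_units {G : Type u} [TopologicalSpace G]
    [T2Space G] [LocallyCompactSpace G] (𝒢 : TopGroupoid G) (hEt : 𝒢.Etale) :
    𝒢.Ample ↔ IsTotallyDisconnected 𝒢.units := by
  constructor
  · -- Ample → totally disconnected unit space
    intro hA t hts ht x hx y hy
    by_contra hxy
    obtain ⟨U, ⟨hUbis, hUcomp⟩, hxU, hUsub⟩ :=
      hA.exists_subset_of_mem_open (Set.mem_compl_singleton_iff.mpr hxy)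
        (isOpen_compl_singleton (x := y))
    have hclopen : IsClopen U := ⟨hUcomp.isClosed, hUbis.1⟩
    have hsub : t ⊆ U := ht.subset_isClopen hclopen ⟨x, hx, hxU⟩
    exact (hUsub (hsub hy)) rfl
  · -- totally disconnected unit space → Ample
    intro hTD
    have hd_cont : Continuous 𝒢.d := IsLocalHomeomorph.continuous hEt
    have hd_open : IsOpenMap 𝒢.d := IsLocalHomeomorph.isOpenMap hEt
    refine TopologicalSpace.isTopologicalBasis_of_isOpen_of_nhds
      (fun U hU => hU.1.1) ?_
    intro g V hgV hV
    obtain ⟨U₀, hU₀, hgU₀, hdinj, hrinj⟩ := 𝒢.exists_bisection_nhd hEt g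
    set U := U₀ ∩ V with hUdef
    have hUopen : IsOpen U := hU₀.inter hV
    have hgU : g ∈ U := ⟨hgU₀, hgV⟩
    have hdinjU : Set.InjOn 𝒢.d U := hdinj.mono Set.inter_subset_left
    have hrinjU : Set.InjOn 𝒢.r U := hrinj.mono Set.inter_subset_left
    set W := 𝒢.d '' U with hWdef
    have hWopen : IsOpen W := hd_open U hUopen
    have hWunits : W ⊆ 𝒢.units := by
      rintro _ ⟨a, _, rfl⟩
      rw [𝒢.units_eq_range]
      exact ⟨a, rfl⟩
    haveI : LocallyCompactSpace W := hWopen.locallyCompactSpace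
    haveI : TotallyDisconnectedSpace W :=
      totallyDisconnectedSpace_subtype_iff.mpr
        (fun t hts ht => hTD t (hts.trans hWunits) ht)
    have hxW : 𝒢.d g ∈ W := ⟨g, hgU, rfl⟩
    obtain ⟨C, hC, hCnhds⟩ := exists_compact_mem_nhds (⟨𝒢.d g, hxW⟩ : W)
    obtain ⟨K, hKclopen, hxK, hKint⟩ :=
      loc_compact_Haus_tot_disc_of_zero_dim.exists_subset_of_mem_open
        (mem_interior_iff_mem_nhds.mpr hCnhds) isOpen_interior
    have hKcompact : IsCompact K :=
      hC.of_isClosed_subset hKclopen.isClosed (hKint.trans interior_subset)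
    set K' : Set G := Subtype.val '' K with hK'def
    have hK'open : IsOpen K' := hWopen.isOpenMap_subtype_val K hKclopen.isOpen
    have hK'compact : IsCompact K' := hKcompact.image continuous_subtype_val
    have hK'W : K' ⊆ W := by
      rintro _ ⟨k, _, rfl⟩
      exact k.2
    have hxK' : 𝒢.d g ∈ K' := ⟨⟨𝒢.d g, hxW⟩, hxK, rfl⟩
    refine ⟨U ∩ 𝒢.d ⁻¹' K', ⟨?_, ?_⟩, ⟨hgU, hxK'⟩, fun a ha => ha.1.2⟩
    · exact 𝒢.isBisection_of_injOn hEt (hUopen.inter (hK'open.preimage hd_cont))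
        (hdinjU.mono Set.inter_subset_left) (hrinjU.mono Set.inter_subset_left)
    · -- compactness of `U ∩ d ⁻¹' K'`
      have hBis := 𝒢.isBisection_of_injOn hEt hUopen hdinjU hrinjU
      have hemb : Topology.IsEmbedding (U.restrict 𝒢.d) := hBis.2.1.isEmbedding
      have hset : U ∩ 𝒢.d ⁻¹' K' = Subtype.val '' ((U.restrict 𝒢.d) ⁻¹' K') := by
        ext a
        constructor
        · rintro ⟨haU, hda⟩
          exact ⟨⟨a, haU⟩, hda, rfl⟩
        · rintro ⟨⟨a, haU⟩, hda, rfl⟩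
          exact ⟨haU, hda⟩
      rw [hset]
      refine IsCompact.image ?_ continuous_subtype_val
      rw [hemb.isCompact_iff]
      have hrange : K' ⊆ Set.range (U.restrict 𝒢.d) := by
        rw [show Set.range (U.restrict 𝒢.d) = 𝒢.d '' U from (Set.image_eq_range _ _).symm]
        exact hK'W
      rw [Set.image_preimage_eq_of_subset hrange]
      exact hK'compact
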